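/- Let A, B, C be points of the Euclidean plane (EuclideanSpace ℝ (Fin 2)) with C distinct from A and B, and suppose the (unsigned) angle ∠ACB ≥ 2π/3. Then the vertex C minimizes the total distance to the three vertices: for every point P of the plane, dist(C,A) + dist(C,B) ≤ dist(P,A) + dist(P,B) + dist(P,C). -/

import Mathlib

open EuclideanGeometry Real

lemma stmt_7_aux (x q : EuclideanSpace ℝ (Fin 2)) (hx : x ≠ 0) :
    ‖x‖ - inner ℝ q (‖x‖⁻¹ • x) ≤ ‖q - x‖ := by
  have hn : (0:ℝ) < ‖x‖ := norm_pos_iff.mpr hx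
  have h1 : inner ℝ q (‖x‖⁻¹ • x) = ‖x‖⁻¹ * (inner ℝ q x : ℝ) := real_inner_smul_right _ _ _
  have h2 : (inner ℝ (q - x) x : ℝ) = inner ℝ q x - ‖x‖^2 := by
    rw [inner_sub_left, real_inner_self_eq_norm_sq]
  have h3 : -(‖q - x‖ * ‖x‖) ≤ (inner ℝ (q - x) x : ℝ) := by
    have := abs_real_inner_le_norm (q - x) x
    have := abs_le.mp this
    linarith [this.1]
  rw [h1]
  have h4 : ‖x‖^2 - (inner ℝ q x : ℝ) ≤ ‖q - x‖ * ‖x‖ := by linarith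
  have h5 : ‖x‖ - ‖x‖⁻¹ * (inner ℝ q x : ℝ) = ‖x‖⁻¹ * (‖x‖^2 - inner ℝ q x) := by
    field_simp
  rw [h5]
  calc ‖x‖⁻¹ * (‖x‖^2 - (inner ℝ q x : ℝ)) ≤ ‖x‖⁻¹ * (‖q - x‖ * ‖x‖) :=
        mul_le_mul_of_nonneg_left h4 (inv_nonneg.mpr hn.le)
    _ = ‖q - x‖ := by field_simp

/-- If the unsigned angle `∠ A C B` of a triangle `ABC` in the Euclidean plane is at
least `2π/3`, then the vertex `C` minimizes the total distance to the three vertices. -/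
theorem stmt_7 (A B C : EuclideanSpace ℝ (Fin 2))
    (hA : C ≠ A) (hB : C ≠ B) (h : 2 * π / 3 ≤ ∠ A C B) :
    ∀ P : EuclideanSpace ℝ (Fin 2),
      dist C A + dist C B ≤ dist P A + dist P B + dist P C := by
  intro P
  have ha : A - C ≠ 0 := sub_ne_zero.mpr hA.symm
  have hb : B - C ≠ 0 := sub_ne_zero.mpr hB.symm
  set a : EuclideanSpace ℝ (Fin 2) := A - C with ha_def
  set b : EuclideanSpace ℝ (Fin 2) := B - C with hb_def
  set p : EuclideanSpace ℝ (Fin 2) := P - C with hp_def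
  have hna : (0:ℝ) < ‖a‖ := norm_pos_iff.mpr ha
  have hnb : (0:ℝ) < ‖b‖ := norm_pos_iff.mpr hb
  set u : EuclideanSpace ℝ (Fin 2) := ‖a‖⁻¹ • a with hu_def
  set v : EuclideanSpace ℝ (Fin 2) := ‖b‖⁻¹ • b with hv_def
  have hu : ‖u‖ = 1 := by
    rw [hu_def, norm_smul, norm_inv, norm_norm, inv_mul_cancel₀ hna.ne']
  have hv : ‖v‖ = 1 := by
    rw [hv_def, norm_smul, norm_inv, norm_norm, inv_mul_cancel₀ hnb.ne']
  -- cosine bound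
  have hangle : ∠ A C B ≤ π := EuclideanGeometry.angle_le_pi _ _ _
  have hcos : Real.cos (∠ A C B) ≤ -(1/2) := by
    have h1 : Real.cos (∠ A C B) ≤ Real.cos (2 * π / 3) :=
      Real.cos_le_cos_of_nonneg_of_le_pi (by positivity) hangle h
    have h2 : Real.cos (2 * π / 3) = -(1/2) := by
      rw [show (2 * π / 3 : ℝ) = π - π / 3 by ring, Real.cos_pi_sub,
        Real.cos_pi_div_three]
    linarith
  have hcosval : (inner ℝ a b : ℝ) / (‖a‖ * ‖b‖) ≤ -(1/2) := by
    have : ∠ A C B = InnerProductGeometry.angle a b := by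
      rw [EuclideanGeometry.angle, ha_def, hb_def]
      rfl
    rwa [this, InnerProductGeometry.cos_angle] at hcos
  have huv : (inner ℝ u v : ℝ) ≤ -(1/2) := by
    have : (inner ℝ u v : ℝ) = (inner ℝ a b : ℝ) / (‖a‖ * ‖b‖) := by
      rw [hu_def, hv_def, real_inner_smul_left, real_inner_smul_right]
      field_simp
    linarith [this ▸ hcosval]
  have hnormuv : ‖u + v‖ ≤ 1 := by
    have hsq : ‖u + v‖^2 = ‖u‖^2 + 2 * (inner ℝ u v : ℝ) + ‖v‖^2 := norm_add_sq_real u v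
    rw [hu, hv] at hsq
    nlinarith [norm_nonneg (u + v)]
  have hp1 : ‖a‖ - (inner ℝ p u : ℝ) ≤ ‖p - a‖ := stmt_7_aux a p ha
  have hp2 : ‖b‖ - (inner ℝ p v : ℝ) ≤ ‖p - b‖ := stmt_7_aux b p hb
  have hp3 : (inner ℝ p u : ℝ) + (inner ℝ p v : ℝ) ≤ ‖p‖ := by
    have h1 : (inner ℝ p (u + v) : ℝ) ≤ ‖p‖ * ‖u + v‖ := real_inner_le_norm _ _
    have h2 : (inner ℝ p (u + v) : ℝ) = inner ℝ p u + inner ℝ p v := inner_add_right _ _ _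
    nlinarith [norm_nonneg p]
  have dCA : dist C A = ‖a‖ := by rw [dist_eq_norm, ha_def, ← norm_neg]; congr 1; abel
  have dCB : dist C B = ‖b‖ := by rw [dist_eq_norm, hb_def, ← norm_neg]; congr 1; abel
  have dPA : dist P A = ‖p - a‖ := by
    rw [dist_eq_norm, hp_def, ha_def]; congr 1; abel
  have dPB : dist P B = ‖p - b‖ := by
    rw [dist_eq_norm, hp_def, hb_def]; congr 1; abel
  have dPC : dist P C = ‖p‖ := by rw [dist_eq_norm, hp_def]
  rw [dCA, dCB, dPA, dPB, dPC]
  linarith
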